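/- There exist subspaces A ⊆ W₁, B ⊆ W₂, and C ⊆ ℝⁿ, each of dimension at most Z, such that A + C = ℝⁿ and B + C = ℝⁿ. -/

import Mathlib

open Matrix

open Module Submodule

lemma exists_notMem_two {V : Type*} [AddCommGroup V] [Module ℝ V]
    (p q : Submodule ℝ V) (hp : p ≠ ⊤) (hq : q ≠ ⊤) :
    ∃ v : V, v ∉ p ∧ v ∉ q := by
  classical
  have h := Subspace.biUnion_ne_univ_of_top_notMem (s := ({p, q} : Finset (Subspace ℝ V)))
    (by simp only [Finset.mem_insert, Finset.mem_singleton]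
        push_neg
        exact ⟨Ne.symm hp, Ne.symm hq⟩)
  rw [Set.ne_univ_iff_exists_notMem] at h
  obtain ⟨v, hv⟩ := h
  exact ⟨v, fun h' => hv (Set.mem_biUnion (Finset.mem_insert_self _ _) h'),
    fun h' => hv (Set.mem_biUnion (Finset.mem_insert_of_mem (Finset.mem_singleton_self _)) h')⟩

lemma compl_step {V : Type*} [AddCommGroup V] [Module ℝ V]
    {r C' : Submodule ℝ V} {v : V} (hvr : v ∉ r)
    (h : IsCompl (r ⊔ ℝ ∙ v) C') : IsCompl r (C' ⊔ ℝ ∙ v) := by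
  constructor
  · rw [disjoint_def]
    intro x hx hx'
    obtain ⟨c, hc, w, hw, rfl⟩ := Submodule.mem_sup.mp hx'
    obtain ⟨t, rfl⟩ := Submodule.mem_span_singleton.mp hw
    have hcmem : c ∈ r ⊔ ℝ ∙ v := by
      have hce : c = (c + t • v) - t • v := by abel
      rw [hce]
      exact Submodule.sub_mem _ (le_sup_left (α := Submodule ℝ V) hx)
        (le_sup_right (α := Submodule ℝ V) (Submodule.mem_span_singleton.mpr ⟨t, rfl⟩))
    have hc0 : c = 0 := (disjoint_def.mp h.disjoint.symm) c hc hcmem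
    subst hc0
    rw [zero_add] at hx ⊢
    by_contra hne
    have ht : t ≠ 0 := by rintro rfl; simp at hne
    have : v ∈ r := by
      have := Submodule.smul_mem _ t⁻¹ hx
      rwa [inv_smul_smul₀ ht] at this
    exact hvr this
  · rw [codisjoint_iff, sup_comm C' (ℝ ∙ v), ← sup_assoc]
    exact h.codisjoint.eq_top

lemma common_compl_aux {V : Type*} [AddCommGroup V] [Module ℝ V] [FiniteDimensional ℝ V] :
    ∀ (d : ℕ) (p q : Submodule ℝ V), finrank ℝ V - finrank ℝ p = d →
      finrank ℝ p = finrank ℝ q → ∃ C : Submodule ℝ V, IsCompl p C ∧ IsCompl q C := by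
  intro d
  induction d with
  | zero =>
    intro p q hd hpq
    have hp : p = ⊤ := Submodule.eq_top_of_finrank_eq
      (le_antisymm (finrank_le p) (Nat.le_of_sub_eq_zero hd))
    have hq : q = ⊤ := Submodule.eq_top_of_finrank_eq
      (le_antisymm (finrank_le q) (hpq ▸ Nat.le_of_sub_eq_zero hd))
    exact ⟨⊥, hp ▸ isCompl_top_bot, hq ▸ isCompl_top_bot⟩
  | succ d ih =>
    intro p q hd hpq
    have hp : p ≠ ⊤ := by
      intro h; rw [h, finrank_top] at hd; omega
    have hq : q ≠ ⊤ := by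
      intro h; rw [h, finrank_top] at hpq; omega
    obtain ⟨v, hvp, hvq⟩ := exists_notMem_two p q hp hq
    have hrank : ∀ (r : Submodule ℝ V), v ∉ r →
        finrank ℝ ↥(r ⊔ ℝ ∙ v) = finrank ℝ r + 1 := by
      intro r hvr
      have hdisj : Disjoint r (ℝ ∙ v) := (Submodule.disjoint_span_singleton' (by
        rintro rfl; exact hvr r.zero_mem)).mpr hvr
      have heq := Submodule.finrank_sup_add_finrank_inf_eq r (ℝ ∙ v)
      rw [hdisj.eq_bot, finrank_bot,
        finrank_span_singleton (by rintro rfl; exact hvr r.zero_mem)] at heq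
      omega
    obtain ⟨C', hC'p, hC'q⟩ := ih (p ⊔ ℝ ∙ v) (q ⊔ ℝ ∙ v)
      (by rw [hrank p hvp]; omega) (by rw [hrank p hvp, hrank q hvq, hpq])
    exact ⟨C' ⊔ ℝ ∙ v, compl_step hvp hC'p, compl_step hvq hC'q⟩

lemma common_compl {V : Type*} [AddCommGroup V] [Module ℝ V] [FiniteDimensional ℝ V]
    (p q : Submodule ℝ V) (hpq : finrank ℝ p = finrank ℝ q) :
    ∃ C : Submodule ℝ V, IsCompl p C ∧ IsCompl q C :=
  common_compl_aux _ p q rfl hpq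


/-- Theorem 3, case `2Z > n`: with `W₁` the span of the first `a`
columns of an invertible `L` and `W₂` the span of the last `b` columns, and
`a, b ≥ n - Z`, `Z ≤ n < 2Z`, there exist subspaces `A ⊆ W₁`, `B ⊆ W₂`,
`C ⊆ ℝⁿ`, each of dimension at most `Z`, with `A + C = ℝⁿ` and `B + C = ℝⁿ`. -/
theorem task_aware_coding_sufficient_condition_large_Z
    (n Z a b : ℕ) (hn : 0 < n) (hZ : 0 < Z) (ha : 0 < a) (hb : 0 < b)
    (hZn : Z ≤ n) (hn2Z : n < 2 * Z)
    (han : a ≤ n) (hbn : b ≤ n) (hnab : n ≤ a + b)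
    (haZ : n - Z ≤ a) (hbZ : n - Z ≤ b)
    (L : Matrix (Fin n) (Fin n) ℝ) (hL : IsUnit L.det)
    (W₁ W₂ : Submodule ℝ (Fin n → ℝ))
    (hW₁ : W₁ = Submodule.span ℝ ((fun j : Fin n => Lᵀ j) '' {j : Fin n | (j : ℕ) < a}))
    (hW₂ : W₂ = Submodule.span ℝ ((fun j : Fin n => Lᵀ j) '' {j : Fin n | n - b ≤ (j : ℕ)})) :
    ∃ A B C : Submodule ℝ (Fin n → ℝ),
      A ≤ W₁ ∧ B ≤ W₂ ∧
      Module.finrank ℝ ↥A ≤ Z ∧ Module.finrank ℝ ↥B ≤ Z ∧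
      Module.finrank ℝ ↥C ≤ Z ∧
      A ⊔ C = ⊤ ∧ B ⊔ C = ⊤ := by
  set k := n - Z with hk
  have hkZ : k ≤ Z := by omega
  have li : LinearIndependent ℝ (fun j : Fin n => Lᵀ j) :=
    Matrix.linearIndependent_cols_iff_isUnit.mpr ((Matrix.isUnit_iff_isUnit_det L).mpr hL)
  have hkn : k ≤ n := by omega
  -- index maps
  set fA : Fin k → Fin n := Fin.castLE hkn with hfA
  set fB : Fin k → Fin n := fun i => ⟨Z + (i : ℕ), by omega⟩ with hfB
  have hfAinj : Function.Injective fA := Fin.castLE_injective hkn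
  have hfBinj : Function.Injective fB := by
    intro i j h
    have : Z + (i : ℕ) = Z + (j : ℕ) := congrArg (Fin.val) h
    exact Fin.ext (by omega)
  set A := Submodule.span ℝ (Set.range (fun i : Fin k => Lᵀ (fA i))) with hA
  set B := Submodule.span ℝ (Set.range (fun i : Fin k => Lᵀ (fB i))) with hB
  have liA : LinearIndependent ℝ (fun i : Fin k => Lᵀ (fA i)) := li.comp fA hfAinj
  have liB : LinearIndependent ℝ (fun i : Fin k => Lᵀ (fB i)) := li.comp fB hfBinj
  have frA : Module.finrank ℝ A = k := by
    rw [hA, finrank_span_eq_card liA, Fintype.card_fin]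
  have frB : Module.finrank ℝ B = k := by
    rw [hB, finrank_span_eq_card liB, Fintype.card_fin]
  obtain ⟨C, hCA, hCB⟩ := common_compl A B (by rw [frA, frB])
  have frC : Module.finrank ℝ C ≤ Z := by
    have h1 := Submodule.finrank_add_eq_of_isCompl hCA
    rw [frA, Module.finrank_fintype_fun_eq_card, Fintype.card_fin] at h1
    omega
  refine ⟨A, B, C, ?_, ?_, by rw [frA]; exact hkZ, by rw [frB]; exact hkZ, frC,
    hCA.codisjoint.eq_top, hCB.codisjoint.eq_top⟩
  · rw [hA, hW₁, Submodule.span_le]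
    rintro x ⟨i, rfl⟩
    exact Submodule.subset_span ⟨fA i, by simp [hfA, Fin.castLE]; omega, rfl⟩
  · rw [hB, hW₂, Submodule.span_le]
    rintro x ⟨i, rfl⟩
    exact Submodule.subset_span ⟨fB i, by simp [hfB]; omega, rfl⟩
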